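/- Let n ∈ ℕ and x, y ∈ ℝ with x > 0 and y > 0. Then the generalized symmetric Pascal matrix R_n[x,y], the (n+1)×(n+1) real matrix with entries (R_n[x,y])_{ij} = x^{j−1} y^{i−1} · binom(i+j−2, j−1), is strictly totally positive. -/

import Mathlib

open Finset Matrix

/-- Hockey stick: `∑_{t=0}^{r} C(t+c, c) = C(r+c+1, c+1)`. -/
lemma hockeyN (c : ℕ) : ∀ r : ℕ,
    ∑ t ∈ Finset.range (r + 1), (t + c).choose c = (r + c + 1).choose (c + 1) := by
  intro r
  induction r with
  | zero => simp
  | succ r ih =>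
      rw [Finset.sum_range_succ, ih, show r + 1 + c + 1 = (r + c + 1) + 1 by ring,
        Nat.choose_succ_succ (r + c + 1) c, show r + 1 + c = r + c + 1 by ring,
        Nat.succ_eq_add_one]
      omega

lemma rangesumR (c r : ℕ) :
    ∑ t ∈ Finset.range (r + 1), (((t + c).choose c : ℕ) : ℝ)
      = (((r + c + 1).choose (c + 1) : ℕ) : ℝ) := by
  rw [← Nat.cast_sum, hockeyN]

lemma icosumR (c a b : ℕ) (hab : a ≤ b) :
    ∑ t ∈ Finset.Ico (a + 1) (b + 1), (((t + c).choose c : ℕ) : ℝ)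
      = (((b + c + 1).choose (c + 1) : ℕ) : ℝ) - (((a + c + 1).choose (c + 1) : ℕ) : ℝ) := by
  rw [Finset.sum_Ico_eq_sub _ (by omega), rangesumR, rangesumR]

/-- Core: all minors of the Pascal-type matrix `C(r_i + c_j, c_j)` are positive. -/
lemma core : ∀ (N k : ℕ) (r c : Fin k → ℕ), k + ∑ j, c j ≤ N →
    StrictMono r → StrictMono c →
    0 < Matrix.det (Matrix.of fun i j : Fin k => (((r i + c j).choose (c j) : ℕ) : ℝ)) := by
  intro N
  induction N with
  | zero =>
      intro k r c hN _ _
      have hk : k = 0 := by omega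
      subst hk
      simp [Matrix.det_isEmpty]
  | succ N ih =>
      rintro k r c hN hr hc
      match k with
      | 0 => simp [Matrix.det_isEmpty]
      | k' + 1 =>
        set M : Matrix (Fin (k' + 1)) (Fin (k' + 1)) ℝ :=
          Matrix.of fun i j => (((r i + c j).choose (c j) : ℕ) : ℝ) with hM
        by_cases h0 : c 0 = 0
        · -- first column is all ones; difference rows and expand along column 0
          have hc1 : ∀ j : Fin k', 1 ≤ c j.succ := by
            intro j
            have := hc (Fin.succ_pos j)
            omega
          set B : Matrix (Fin (k' + 1)) (Fin (k' + 1)) ℝ :=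
            Matrix.of (fun i => Fin.cases (M 0) (fun i' => M i'.succ - M i'.castSucc) i)
            with hB
          have hcol : ∀ i : Fin k', B i.succ 0 = 0 := by
            intro i
            have h1 : M i.succ 0 = 1 := by
              simp only [hM, Matrix.of_apply, h0, Nat.choose_zero_right, Nat.add_zero,
                Nat.cast_one]
            have h2 : M i.castSucc 0 = 1 := by
              simp only [hM, Matrix.of_apply, h0, Nat.choose_zero_right, Nat.add_zero,
                Nat.cast_one]
            simp only [hB, Matrix.of_apply]
            rw [Fin.cases_succ]
            simp [h1, h2]
          have hMB : Matrix.det M = Matrix.det B := by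
            apply Matrix.det_eq_of_forall_row_eq_smul_add_pred (fun _ => (1 : ℝ))
            · intro j
              simp only [hB, Matrix.of_apply]
              rw [Fin.cases_zero]
            · intro i j
              simp only [hB, Matrix.of_apply]
              rw [Fin.cases_succ]
              simp only [Pi.sub_apply]
              ring
          have hdet : Matrix.det B = Matrix.det (B.submatrix Fin.succ Fin.succ) := by
            rw [Matrix.det_succ_column_zero, Finset.sum_eq_single 0]
            · have hB00 : B 0 0 = 1 := by
                simp only [hB, Matrix.of_apply]
                rw [Fin.cases_zero]
                simp only [hM, Matrix.of_apply, h0, Nat.choose_zero_right, Nat.add_zero,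
                  Nat.cast_one]
              simp [hB00, Fin.succAbove_zero]
            · intro b _ hb
              obtain ⟨b', rfl⟩ := Fin.eq_succ_of_ne_zero hb
              rw [hcol b']
              ring
            · intro h
              exact absurd (Finset.mem_univ 0) h
          set w : ℕ → Fin k' → ℝ :=
            fun t j => (((t + (c j.succ - 1)).choose (c j.succ - 1) : ℕ) : ℝ) with hw
          set S' : Fin k' → Finset ℕ :=
            fun i => Finset.Ico (r i.castSucc + 1) (r i.succ + 1) with hS'
          have hD : B.submatrix Fin.succ Fin.succ = Matrix.of (fun i => ∑ t ∈ S' i, w t) := by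
            ext i j
            have hle : r i.castSucc ≤ r i.succ := (hr (Fin.castSucc_lt_succ : (i).castSucc < (i).succ)).le
            have hrhs : (Matrix.of (fun i => ∑ t ∈ S' i, w t)) i j
                = ∑ t ∈ Finset.Ico (r i.castSucc + 1) (r i.succ + 1),
                    (((t + (c j.succ - 1)).choose (c j.succ - 1) : ℕ) : ℝ) := by
              simp only [Matrix.of_apply, Finset.sum_apply, hw, hS']
            rw [hrhs, icosumR _ _ _ hle]
            have e1 : r i.succ + (c j.succ - 1) + 1 = r i.succ + c j.succ := by
              have := hc1 j; omega
            have e2 : r i.castSucc + (c j.succ - 1) + 1 = r i.castSucc + c j.succ := by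
              have := hc1 j; omega
            have e3 : c j.succ - 1 + 1 = c j.succ := by have := hc1 j; omega
            rw [e1, e2, e3]
            simp only [Matrix.submatrix_apply, hB, Matrix.of_apply]
            rw [Fin.cases_succ]
            simp only [Pi.sub_apply, hM, Matrix.of_apply]
          have hexp : Matrix.det (Matrix.of (fun i => ∑ t ∈ S' i, w t))
              = ∑ f ∈ Fintype.piFinset S', Matrix.det (Matrix.of fun i => w (f i)) := by
            exact MultilinearMap.map_sum_finset
              (Matrix.detRowAlternating.toMultilinearMap) (fun _ t => w t) S'
          rw [hMB, hdet, hD, hexp]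
          apply Finset.sum_pos
          · intro f hf
            have hfmem : ∀ i, f i ∈ S' i := Fintype.mem_piFinset.mp hf
            have hfmono : StrictMono f := by
              intro a b hab
              have ha := Finset.mem_Ico.mp (hfmem a)
              have hb := Finset.mem_Ico.mp (hfmem b)
              have hab' : a.succ ≤ b.castSucc := by
                rw [Fin.lt_def] at hab
                rw [Fin.le_def]
                simp only [Fin.val_succ, Fin.coe_castSucc]
                omega
              have := hr.monotone hab'
              omega
            have hcm : StrictMono (fun j : Fin k' => c j.succ - 1) := by
              intro a b hab
              have h1 : c a.succ < c b.succ := hc (Fin.succ_lt_succ_iff.mpr hab)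
              have h2 := hc1 a
              show c a.succ - 1 < c b.succ - 1
              omega
            have hmeas : k' + ∑ j : Fin k', (c j.succ - 1) ≤ N := by
              have hsplit : ∑ j : Fin (k' + 1), c j = c 0 + ∑ j : Fin k', c j.succ :=
                Fin.sum_univ_succ c
              have hle2 : ∑ j : Fin k', (c j.succ - 1) ≤ ∑ j : Fin k', c j.succ :=
                Finset.sum_le_sum fun j _ => Nat.sub_le _ _
              omega
            exact ih k' f (fun j => c j.succ - 1) hmeas hfmono hcm
          · rw [Fintype.piFinset_nonempty]
            intro a
            apply Finset.nonempty_Ico.mpr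
            have := hr (Fin.castSucc_lt_succ : (a).castSucc < (a).succ)
            omega
        · -- all `c j ≥ 1`; every row is an interval sum
          have hc1 : ∀ j, 1 ≤ c j := by
            intro j
            have := hc.monotone (Fin.zero_le j)
            omega
          set v : ℕ → Fin (k' + 1) → ℝ :=
            fun t j => (((t + (c j - 1)).choose (c j - 1) : ℕ) : ℝ) with hv
          set lo : Fin (k' + 1) → ℕ := Fin.cases 0 (fun i => r i.castSucc + 1) with hlo
          set S : Fin (k' + 1) → Finset ℕ := fun i => Finset.Ico (lo i) (r i + 1) with hS
          set B : Matrix (Fin (k' + 1)) (Fin (k' + 1)) ℝ :=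
            Matrix.of fun i => ∑ t ∈ S i, v t with hB
          have hMB : Matrix.det M = Matrix.det B := by
            apply Matrix.det_eq_of_forall_row_eq_smul_add_pred (fun _ => (1 : ℝ))
            · intro j
              have hB0 : B 0 j
                  = ∑ t ∈ Finset.range (r 0 + 1), (((t + (c j - 1)).choose (c j - 1) : ℕ) : ℝ) := by
                simp only [hB, Matrix.of_apply, Finset.sum_apply, hv, hS, hlo]
                rw [Fin.cases_zero, Nat.Ico_zero_eq_range]
              have e1 : r 0 + (c j - 1) + 1 = r 0 + c j := by have := hc1 j; omega
              have e2 : c j - 1 + 1 = c j := by have := hc1 j; omega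
              rw [hB0, rangesumR, e1, e2, hM]
              rfl
            · intro i j
              have hBi : B i.succ j
                  = ∑ t ∈ Finset.Ico (r i.castSucc + 1) (r i.succ + 1),
                      (((t + (c j - 1)).choose (c j - 1) : ℕ) : ℝ) := by
                simp only [hB, Matrix.of_apply, Finset.sum_apply, hv, hS, hlo]
                rw [Fin.cases_succ]
              have hle : r i.castSucc ≤ r i.succ := (hr (Fin.castSucc_lt_succ : (i).castSucc < (i).succ)).le
              rw [hBi, icosumR _ _ _ hle]
              have e1 : r i.succ + (c j - 1) + 1 = r i.succ + c j := by have := hc1 j; omega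
              have e2 : r i.castSucc + (c j - 1) + 1 = r i.castSucc + c j := by
                have := hc1 j; omega
              have e3 : c j - 1 + 1 = c j := by have := hc1 j; omega
              rw [e1, e2, e3, hM]
              simp only [Matrix.of_apply]
              ring
          have hexp : Matrix.det B
              = ∑ f ∈ Fintype.piFinset S, Matrix.det (Matrix.of fun i => v (f i)) := by
            exact MultilinearMap.map_sum_finset
              (Matrix.detRowAlternating.toMultilinearMap) (fun _ t => v t) S
          rw [hMB, hexp]
          apply Finset.sum_pos
          · intro f hf
            have hfmem : ∀ i, f i ∈ S i := Fintype.mem_piFinset.mp hf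
            have hfmono : StrictMono f := by
              intro a b hab
              have ha := Finset.mem_Ico.mp (hfmem a)
              have hb := Finset.mem_Ico.mp (hfmem b)
              -- b ≠ 0 since a < b
              rcases Fin.eq_zero_or_eq_succ b with rfl | ⟨b', rfl⟩
              · exact absurd hab (Fin.not_lt_zero a).elim
              · have hlob : lo b'.succ = r b'.castSucc + 1 := by
                  simp only [hlo]; rw [Fin.cases_succ]
                have hab' : a ≤ b'.castSucc := by
                  have := hab
                  rw [Fin.lt_def] at this
                  rw [Fin.le_def]
                  simp only [Fin.val_succ, Fin.coe_castSucc] at this ⊢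
                  omega
                have := hr.monotone hab'
                rw [hlob] at hb
                omega
            have hcm : StrictMono (fun j => c j - 1) := by
              intro a b hab
              have h1 := hc hab
              have h2 := hc1 a
              show c a - 1 < c b - 1
              omega
            have hmeas : (k' + 1) + ∑ j, (c j - 1) ≤ N := by
              have hsum : ∑ j, (c j - 1) + (k' + 1) = ∑ j : Fin (k' + 1), c j := by
                have : ∀ j : Fin (k' + 1), c j = (c j - 1) + 1 := fun j => by
                  have := hc1 j; omega
                calc ∑ j, (c j - 1) + (k' + 1)
                    = ∑ j : Fin (k' + 1), ((c j - 1) + 1) := by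
                      rw [Finset.sum_add_distrib]
                      simp [Finset.card_univ]
                  _ = ∑ j : Fin (k' + 1), c j := by
                      exact Finset.sum_congr rfl fun j _ => (this j).symm
              omega
            exact ih (k' + 1) f (fun j => c j - 1) hmeas hfmono hcm
          · rw [Fintype.piFinset_nonempty]
            intro a
            rw [hS]
            apply Finset.nonempty_Ico.mpr
            rcases Fin.eq_zero_or_eq_succ a with rfl | ⟨a', rfl⟩
            · simp only [hlo]; rw [Fin.cases_zero]; omega
            · simp only [hlo]; rw [Fin.cases_succ]
              have := hr (Fin.castSucc_lt_succ : (a').castSucc < (a').succ)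
              omega



/-- A square real matrix is strictly totally positive if every minor (the
determinant of any square submatrix obtained by selecting rows and columns
along strictly increasing index sequences) is positive. -/
def IsStrictlyTotallyPositive {m : ℕ} (A : Matrix (Fin m) (Fin m) ℝ) : Prop :=
  ∀ (k : ℕ) (r c : Fin k → Fin m), StrictMono r → StrictMono c →
    0 < (A.submatrix r c).det

/-- The generalized symmetric Pascal matrix `R_n[x,y]`, the `(n+1)×(n+1)`
real matrix with entries `(R_n[x,y])_{ij} = x^{j−1}·y^{i−1}·binom(i+j−2, j−1)`
(0-based indexing). -/
noncomputable def genSymPascal (n : ℕ) (x y : ℝ) :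
    Matrix (Fin (n + 1)) (Fin (n + 1)) ℝ :=
  fun i j =>
    x ^ (j : ℕ) * y ^ (i : ℕ) * (((i : ℕ) + (j : ℕ)).choose (j : ℕ))

/-- For `x > 0` and `y > 0`, the generalized symmetric Pascal matrix
`R_n[x,y]` is strictly totally positive. -/
theorem genSymPascal_strictlyTotallyPositive (n : ℕ) (x y : ℝ)
    (hx : 0 < x) (hy : 0 < y) :
    IsStrictlyTotallyPositive (genSymPascal n x y) := by
  intro k r c hr hc
  have hR : StrictMono (fun i => ((r i : Fin (n + 1)) : ℕ)) :=
    fun a b h => Fin.lt_def.mp (hr h)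
  have hC : StrictMono (fun j => ((c j : Fin (n + 1)) : ℕ)) :=
    fun a b h => Fin.lt_def.mp (hc h)
  have hsub : (genSymPascal n x y).submatrix r c
      = Matrix.of (fun i j : Fin k => y ^ ((r i : ℕ)) *
          (Matrix.of (fun i j : Fin k => x ^ ((c j : ℕ)) *
            (Matrix.of fun i j : Fin k =>
              (((((r i : ℕ)) + ((c j : ℕ))).choose ((c j : ℕ)) : ℕ) : ℝ)) i j) i j)) := by
    ext i j
    simp only [Matrix.submatrix_apply, Matrix.of_apply, genSymPascal]
    ring
  rw [hsub, Matrix.det_mul_column, Matrix.det_mul_row]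
  have h1 : (0 : ℝ) < ∏ i, y ^ ((r i : ℕ)) :=
    Finset.prod_pos fun i _ => pow_pos hy _
  have h2 : (0 : ℝ) < ∏ j, x ^ ((c j : ℕ)) :=
    Finset.prod_pos fun j _ => pow_pos hx _
  have h3 := core (k + ∑ j, ((c j : Fin (n + 1)) : ℕ)) k
    (fun i => ((r i : Fin (n + 1)) : ℕ)) (fun j => ((c j : Fin (n + 1)) : ℕ))
    le_rfl hR hC
  exact mul_pos h1 (mul_pos h2 h3)
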